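/- The set of subfields F of the algebraic closure of ℚ that are Hilbertian is a G_δ subset of the space 𝓔 of all subfields of the algebraic closure of ℚ; explicitly, it equals a countable intersection of the open sets V_{f₁,…,fₙ,g} described as follows: for n > 0, irreducible f₁,…,fₙ ∈ Q̄[X,Y] monic of degree at least 2 in Y, and nonzero g ∈ Q̄[X], let V_{f₁,…,fₙ,g} = (𝓔 \ {F ∈ 𝓔 : f₁,…,fₙ,g all have coefficients in F}) ∪ ⋃_{x ∈ Q̄, g(x)≠0} ⋂_{i=1}^n ⋂_{y ∈ Q̄, fᵢ(x,y)=0} {F ∈ 𝓔 : x ∈ F and y ∉ F}. -/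

import Mathlib

open FirstOrder Topology

noncomputable section

/-- `Q̄`, the algebraic closure of `ℚ`. -/
abbrev Qbar : Type := AlgebraicClosure ℚ

/-- `Prop` with the discrete two-point topology. -/
def propDiscrete : TopologicalSpace Prop := ⊥

/-- The product topology on the powerset `2^Q̄`, identified with `Set Q̄ = Q̄ → Prop`,
where each factor `Prop` carries the discrete two-point topology. -/
def powersetTopology : TopologicalSpace (Set Qbar) :=
  @Pi.topologicalSpace Qbar (fun _ => Prop) (fun _ => propDiscrete)

/-- The space `𝓔` of all subfields of `Q̄`, with the subspace topology induced from `2^Q̄`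
via the identification of a subfield with its underlying set of elements. -/
instance subfieldTopology : TopologicalSpace (Subfield Qbar) :=
  powersetTopology.induced (fun F => (F : Set Qbar))

/-- A subfield `F` of `Q̄` is Hilbertian if for all `n ≥ 1`, all absolutely irreducible
`f₁, …, fₙ ∈ F[X,Y]` (viewed as polynomials in `Y` over `F[X]`) that are monic of degree
at least `2` in `Y`, and all nonzero `g ∈ F[X]`, there is `x ∈ F` with `g(x) ≠ 0` such that
each one-variable polynomial `fᵢ(x,Y)` has no root in `F`. -/
def IsHilbertian (F : Subfield Qbar) : Prop :=
  ∀ (n : ℕ), 0 < n → ∀ (f : Fin n → Polynomial (Polynomial F)) (g : Polynomial F),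
    (∀ i, Irreducible ((f i).map (Polynomial.mapRingHom F.subtype))) →
    (∀ i, (f i).Monic) →
    (∀ i, 2 ≤ (f i).natDegree) →
    g ≠ 0 →
    ∃ x : F, Polynomial.eval x g ≠ 0 ∧
      ∀ i, ∀ y : F, Polynomial.eval y ((f i).map (Polynomial.evalRingHom x)) ≠ 0

/-- The set `V_{f₁,…,fₙ,g}
  = (𝓔 \ {F : f₁,…,fₙ,g ∈ F[X,Y]})
    ∪ ⋃_{x ∈ Q̄, g(x) ≠ 0} ⋂_{i=1}^n ⋂_{y ∈ Q̄, fᵢ(x,y) = 0} {F : x ∈ F, y ∉ F}`,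
where the `fᵢ ∈ Q̄[X,Y]` are viewed as polynomials in `Y` over `Q̄[X]`. -/
def V (n : ℕ) (f : Fin n → Polynomial (Polynomial Qbar)) (g : Polynomial Qbar) :
    Set (Subfield Qbar) :=
  {F | (∀ i j k, ((f i).coeff j).coeff k ∈ F) ∧ (∀ k, g.coeff k ∈ F)}ᶜ ∪
    ⋃ (x : Qbar) (_ : Polynomial.eval x g ≠ 0),
      ⋂ (i : Fin n),
        ⋂ (y : Qbar) (_ : Polynomial.eval y ((f i).map (Polynomial.evalRingHom x)) = 0),
          {F | x ∈ F ∧ y ∉ F}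

/-- The parameters `(n, (f₁,…,fₙ), g)` indexing the sets `V_{f₁,…,fₙ,g}`:
`n > 0`, the `fᵢ ∈ Q̄[X,Y]` are irreducible and monic of degree at least `2` in `Y`,
and `0 ≠ g ∈ Q̄[X]`. -/
def VParams : Set (Σ n : ℕ, (Fin n → Polynomial (Polynomial Qbar)) × Polynomial Qbar) :=
  {p | 0 < p.1 ∧ (∀ i, Irreducible (p.2.1 i)) ∧ (∀ i, (p.2.1 i).Monic) ∧
    (∀ i, 2 ≤ (p.2.1 i).natDegree) ∧ p.2.2 ≠ 0}

section Helpers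

open Polynomial

/-- Lifting a polynomial whose coefficients are in the range of a ring hom. -/
lemma exists_map_eq {R S : Type*} [Semiring R] [Semiring S] (phi : R →+* S)
    (g : Polynomial S) (h : ∀ k, g.coeff k ∈ Set.range phi) :
    ∃ g' : Polynomial R, g'.map phi = g := by
  choose c hc using h
  refine ⟨∑ k ∈ g.support, C (c k) * X ^ k, ?_⟩
  conv_rhs => rw [g.as_sum_support_C_mul_X_pow]
  simp [Polynomial.map_sum, hc]

lemma subtype_inj (F : Subfield Qbar) : Function.Injective F.subtype :=
  fun _ _ h => Subtype.ext h

/-- Two-level lifting into a subfield. -/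
lemma exists_map2_eq (F : Subfield Qbar) (f : Polynomial (Polynomial Qbar))
    (h : ∀ j k, (f.coeff j).coeff k ∈ F) :
    ∃ f' : Polynomial (Polynomial F), f'.map (mapRingHom F.subtype) = f := by
  apply exists_map_eq
  intro j
  obtain ⟨q, hq⟩ := exists_map_eq F.subtype (f.coeff j) (fun k => ⟨⟨_, h j k⟩, rfl⟩)
  exact ⟨q, by simpa using hq⟩

lemma eval_map_sub (F : Subfield Qbar) (q : Polynomial F) (x : F) :
    Polynomial.eval (x : Qbar) (q.map F.subtype) = F.subtype (Polynomial.eval x q) := by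
  rw [Polynomial.eval_map]
  exact Polynomial.eval₂_at_apply F.subtype x

lemma map_evalRingHom_comm (F : Subfield Qbar) (f' : Polynomial (Polynomial F)) (x : F) :
    ((f'.map (mapRingHom F.subtype)).map (evalRingHom (x : Qbar)))
      = (f'.map (evalRingHom x)).map F.subtype := by
  rw [Polynomial.map_map, Polynomial.map_map]
  congr 1
  apply Polynomial.ringHom_ext
  · intro a; simp
  · simp

lemma continuous_memFun (a : Qbar) :
    @Continuous (Subfield Qbar) Prop subfieldTopology propDiscrete (fun F => a ∈ F) := by
  letI tP : TopologicalSpace Prop := propDiscrete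
  letI tS : TopologicalSpace (Set Qbar) := powersetTopology
  have h1 : Continuous (fun F : Subfield Qbar => (F : Set Qbar)) := continuous_induced_dom
  have h2 : Continuous (fun S : Set Qbar => a ∈ S) := continuous_apply a
  exact Continuous.comp h2 h1

lemma discretePropD : @DiscreteTopology Prop propDiscrete := discreteTopology_bot Prop

lemma isClosed_mem (a : Qbar) : IsClosed {F : Subfield Qbar | a ∈ F} := by
  have h : {F : Subfield Qbar | a ∈ F}
      = (fun F : Subfield Qbar => ((a ∈ F) : Prop)) ⁻¹' {p : Prop | p} := rfl
  rw [h]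
  exact @IsClosed.preimage _ _ subfieldTopology propDiscrete _ (continuous_memFun a) _
    (@isClosed_discrete _ propDiscrete discretePropD _)

lemma isOpen_mem (a : Qbar) : IsOpen {F : Subfield Qbar | a ∈ F} := by
  have h : {F : Subfield Qbar | a ∈ F}
      = (fun F : Subfield Qbar => ((a ∈ F) : Prop)) ⁻¹' {p : Prop | p} := rfl
  rw [h]
  exact @IsOpen.preimage _ _ subfieldTopology propDiscrete _ (continuous_memFun a) _
    (@isOpen_discrete _ propDiscrete discretePropD _)

lemma isOpen_V {n : ℕ} {f : Fin n → Polynomial (Polynomial Qbar)} {g : Polynomial Qbar}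
    (hmon : ∀ i, (f i).Monic) : IsOpen (V n f g) := by
  apply IsOpen.union
  · apply isOpen_compl_iff.mpr
    have h1 : {F : Subfield Qbar | (∀ i j k, ((f i).coeff j).coeff k ∈ F) ∧ (∀ k, g.coeff k ∈ F)}
        = (⋂ i, ⋂ j, ⋂ k, {F : Subfield Qbar | ((f i).coeff j).coeff k ∈ F})
          ∩ ⋂ k, {F : Subfield Qbar | g.coeff k ∈ F} := by
      ext F; simp [Set.mem_iInter]
    rw [h1]
    exact (isClosed_iInter fun i => isClosed_iInter fun j => isClosed_iInter fun k =>
      isClosed_mem _).inter (isClosed_iInter fun k => isClosed_mem _)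
  · apply isOpen_iUnion; intro x
    apply isOpen_iUnion; intro _
    apply isOpen_iInter_of_finite; intro i
    have hfin : {y : Qbar | Polynomial.eval y ((f i).map (Polynomial.evalRingHom x)) = 0}.Finite := by
      apply Polynomial.finite_setOf_isRoot
      exact ((hmon i).map (Polynomial.evalRingHom x)).ne_zero
    apply hfin.isOpen_biInter
    intro y _
    have h2 : {F : Subfield Qbar | x ∈ F ∧ y ∉ F}
        = {F : Subfield Qbar | x ∈ F} ∩ {F : Subfield Qbar | y ∈ F}ᶜ := by
      ext F; simp
    rw [h2]
    exact (isOpen_mem x).inter (isClosed_mem y).isOpen_compl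

instance : Countable Qbar := by
  have : Algebra.IsAlgebraic ℚ Qbar := AlgebraicClosure.isAlgebraic ℚ
  have h := Algebra.IsAlgebraic.cardinalMk_le_max ℚ Qbar
  rw [← Cardinal.mk_le_aleph0_iff]
  exact h.trans (by simp)

instance {R : Type*} [Semiring R] [Countable R] : Countable (Polynomial R) :=
  have : Countable (AddMonoidAlgebra R ℕ) :=
    Function.Injective.countable (f := AddMonoidAlgebra.coeff) (fun a b h => by cases a; cases b; cases h; rfl)
  Function.Injective.countable Polynomial.toFinsupp_injective

end Helpers

/-- The set of Hilbertian subfields of `Q̄` is a `G_δ` subset of `𝓔`: explicitly, it is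
the intersection of the sets `V_{f₁,…,fₙ,g}`, each of these sets is open, and this is a
countable intersection. -/
theorem hilbertian_Gdelta_explicit :
    ({F : Subfield Qbar | IsHilbertian F} = ⋂ p ∈ VParams, V p.1 p.2.1 p.2.2) ∧
      (∀ p ∈ VParams, IsOpen (V p.1 p.2.1 p.2.2)) ∧
      VParams.Countable ∧
      IsGδ {F : Subfield Qbar | IsHilbertian F} := by
  have heq : ({F : Subfield Qbar | IsHilbertian F} = ⋂ p ∈ VParams, V p.1 p.2.1 p.2.2) := by
    ext F
    simp only [Set.mem_setOf_eq, Set.mem_iInter]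
    constructor
    · rintro hF ⟨n, f, g⟩ ⟨hn, hirr, hmon, hdeg, hg⟩
      dsimp only at hn hirr hmon hdeg hg ⊢
      by_cases hmem : (∀ i j k, ((f i).coeff j).coeff k ∈ F) ∧ (∀ k, g.coeff k ∈ F)
      · have hlift := fun i => exists_map2_eq F (f i) (hmem.1 i)
        choose f' hf' using hlift
        obtain ⟨g', hg'⟩ := exists_map_eq F.subtype g (fun k => ⟨⟨_, hmem.2 k⟩, rfl⟩)
        have hmi : Function.Injective (Polynomial.mapRingHom F.subtype) :=
          Polynomial.map_injective _ (subtype_inj F)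
        obtain ⟨x, hx1, hx2⟩ := hF n hn f' g'
          (fun i => by rw [hf' i]; exact hirr i)
          (fun i => Polynomial.monic_of_injective hmi (by rw [hf' i]; exact hmon i))
          (fun i => by
            have hnd := Polynomial.natDegree_map_eq_of_injective hmi (f' i)
            rw [hf' i] at hnd
            rw [← hnd]; exact hdeg i)
          (fun h0 => hg (by rw [← hg', h0, Polynomial.map_zero]))
        refine Or.inr (Set.mem_iUnion.2 ⟨(x : Qbar), Set.mem_iUnion.2 ⟨?_, ?_⟩⟩)
        · rw [← hg', eval_map_sub]
          intro h
          exact hx1 (subtype_inj F (by rw [map_zero]; exact h))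
        · refine Set.mem_iInter.2 fun i => Set.mem_iInter.2 fun y => Set.mem_iInter.2 fun hy =>
            ⟨x.2, fun hyF => ?_⟩
          rw [← hf' i, map_evalRingHom_comm] at hy
          have hyy : y = ((⟨y, hyF⟩ : F) : Qbar) := rfl
          rw [hyy, eval_map_sub] at hy
          exact hx2 i ⟨y, hyF⟩ (subtype_inj F (by rw [map_zero]; exact hy))
      · exact Or.inl hmem
    · intro hF n hn f' g' hirr hmon hdeg hg0
      set f : Fin n → Polynomial (Polynomial Qbar) :=
        fun i => (f' i).map (Polynomial.mapRingHom F.subtype) with hf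
      set g : Polynomial Qbar := g'.map F.subtype with hgdef
      have hmi : Function.Injective (Polynomial.mapRingHom F.subtype) :=
        Polynomial.map_injective _ (subtype_inj F)
      have hgne : g ≠ 0 := fun h0 =>
        hg0 (Polynomial.map_injective F.subtype (subtype_inj F)
          (by rw [hgdef] at h0; rw [h0, Polynomial.map_zero]))
      have hmem : F ∈ V n f g := hF ⟨n, f, g⟩
        ⟨hn, hirr, fun i => (hmon i).map _,
          fun i => by
            rw [hf]
            rw [Polynomial.natDegree_map_eq_of_injective hmi (f' i)]
            exact hdeg i,
          hgne⟩
      rcases hmem with hbad | hgood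
      · exfalso
        apply hbad
        constructor
        · intro i j k
          simp only [hf, Polynomial.coeff_map, Polynomial.coe_mapRingHom]
          exact SetLike.coe_mem _
        · intro k
          simp only [hgdef, Polynomial.coeff_map]
          exact SetLike.coe_mem _
      · obtain ⟨x, hx⟩ := Set.mem_iUnion.1 hgood
        obtain ⟨hxg, hin⟩ := Set.mem_iUnion.1 hx
        have i0 : Fin n := ⟨0, hn⟩
        have hP : ((f i0).map (Polynomial.evalRingHom x)).Monic := ((hmon i0).map _).map _
        have hPdeg : ((f i0).map (Polynomial.evalRingHom x)).natDegree = (f' i0).natDegree := by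
          rw [((hmon i0).map (Polynomial.mapRingHom F.subtype)).natDegree_map,
            Polynomial.natDegree_map_eq_of_injective hmi]
        obtain ⟨y, hy⟩ := IsAlgClosed.exists_root ((f i0).map (Polynomial.evalRingHom x)) (by
          rw [Polynomial.degree_eq_natDegree hP.ne_zero, hPdeg]
          have h2 := hdeg i0
          exact_mod_cast (by omega : (f' i0).natDegree ≠ 0))
        have hxyF := Set.mem_iInter.1 (Set.mem_iInter.1 (Set.mem_iInter.1 hin i0) y) hy
        have hxF : x ∈ F := hxyF.1
        refine ⟨⟨x, hxF⟩, ?_, ?_⟩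
        · intro h0
          apply hxg
          have he : Polynomial.eval x g = F.subtype (Polynomial.eval (⟨x, hxF⟩ : F) g') := by
            rw [hgdef]
            exact eval_map_sub F g' ⟨x, hxF⟩
          rw [he, h0, map_zero]
        · intro i y' hy'
          have hco : Polynomial.eval (y' : Qbar) ((f i).map (Polynomial.evalRingHom x)) = 0 := by
            have hc2 : (f i).map (Polynomial.evalRingHom x)
                = ((f' i).map (Polynomial.evalRingHom (⟨x, hxF⟩ : F))).map F.subtype := by
              rw [hf]
              exact map_evalRingHom_comm F (f' i) ⟨x, hxF⟩
            rw [hc2, eval_map_sub, hy', map_zero]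
          have hm2 := Set.mem_iInter.1 (Set.mem_iInter.1 (Set.mem_iInter.1 hin i) (y' : Qbar)) hco
          exact absurd y'.2 hm2.2
  have hopen : ∀ p ∈ VParams, IsOpen (V p.1 p.2.1 p.2.2) := by
    rintro ⟨n, f, g⟩ ⟨_, _, hmon, _, _⟩
    exact isOpen_V hmon
  have hcnt : VParams.Countable := Set.to_countable _
  exact ⟨heq, hopen, hcnt, heq ▸ IsGδ.biInter_of_isOpen hcnt hopen⟩

end
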